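/- Nonnegative lattice paths with up-steps +1 and down-steps -k that start at 0 and end at height t (with 0 ≤ t ≤ k) are in bijection with (t+1)-tuples of k-Dyck paths, by cutting at the last visit to each of the levels 0, 1, ..., t-1. Consequently their generating function by length is z^t * y(z)^(t+1). -/

import Mathlib

open PowerSeries

/-- Total displacement of a path encoded as a list of booleans (`true` = up-step `+1`,
`false` = down-step `-k`). -/
def stepsSum (k : ℕ) (l : List Bool) : ℤ :=
  (l.map fun b => if b then (1 : ℤ) else -(k : ℤ)).sum

namespace Aux

@[simp] lemma ss_nil (k : ℕ) : stepsSum k [] = 0 := rfl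
@[simp] lemma ss_append (k : ℕ) (a b : List Bool) :
    stepsSum k (a ++ b) = stepsSum k a + stepsSum k b := by simp [stepsSum]
@[simp] lemma ss_cons (k : ℕ) (b : Bool) (l : List Bool) :
    stepsSum k (b :: l) = (if b then (1:ℤ) else -(k:ℤ)) + stepsSum k l := by simp [stepsSum]

lemma ss_take_add (k : ℕ) (l : List Bool) (m n : ℕ) :
    stepsSum k (l.take (m + n)) = stepsSum k (l.take m) + stepsSum k ((l.drop m).take n) := by
  rw [← ss_append, ← List.take_add]

def Ok (k : ℕ) (t : ℤ) (p : List Bool) : Prop :=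
  stepsSum k p = t ∧ ∀ q, q <+: p → 0 ≤ stepsSum k q

variable {k : ℕ} {t : ℤ} {q d : List Bool}

lemma sum_take_gt (hq : Ok k t q) (hd : Ok k 0 d) {i : ℕ} (hi : q.length < i) :
    t < stepsSum k ((q ++ true :: d).take i) := by
  obtain ⟨j, rfl⟩ : ∃ j, i = q.length + (j + 1) := ⟨i - q.length - 1, by omega⟩
  rw [ss_take_add, List.take_left, List.drop_left, List.take_succ_cons, ss_cons, hq.1]
  have := hd.2 (d.take j) (List.take_prefix _ _)
  simp only [if_true]
  omega

lemma split_exists (htk : 0 ≤ t ∧ t + 1 ≤ (k:ℤ)) {p : List Bool} (hp : Ok k (t+1) p) :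
    ∃ w : List Bool × List Bool, Ok k t w.1 ∧ Ok k 0 w.2 ∧ p = w.1 ++ true :: w.2 := by
  classical
  set P : ℕ → Prop := fun i => stepsSum k (p.take i) ≤ t with hP
  have hP0 : P 0 := by simp [hP]; omega
  set m := Nat.findGreatest P p.length with hm
  have hmle : m ≤ p.length := Nat.findGreatest_le _
  have hPm : P m := Nat.findGreatest_spec (Nat.zero_le _) hP0
  have hgt : ∀ i, m < i → i ≤ p.length → t < stepsSum k (p.take i) := by
    intro i h1 h2
    have := Nat.findGreatest_is_greatest (n := p.length) (P := P) h1 h2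
    simp only [hP] at this; omega
  have hmlt : m < p.length := by
    rcases lt_or_eq_of_le hmle with h | h
    · exact h
    · exfalso; rw [h] at hPm
      simp only [hP, List.take_length] at hPm
      rw [hp.1] at hPm; omega
  have htake1 : p.take (m+1) = p.take m ++ (p.drop m).take 1 := by
    rw [← List.take_add]
  have hdropcons : p.drop m = p[m] :: p.drop (m+1) := List.drop_eq_getElem_cons hmlt
  have hsum1 : t < stepsSum k (p.take (m+1)) := hgt _ (Nat.lt_succ_self m) hmlt
  have hPm' : stepsSum k (p.take m) ≤ t := hPm
  have hup : p[m] = true := by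
    by_contra hfalse
    have hf : p[m] = false := by simpa using hfalse
    rw [htake1, hdropcons, hf] at hsum1
    have h1 : stepsSum k ((false :: p.drop (m+1)).take 1) = -(k:ℤ) := by simp [stepsSum]
    rw [ss_append, h1] at hsum1
    omega
  have hsum_take1 : stepsSum k ((p.drop m).take 1) = 1 := by
    rw [hdropcons, hup]; simp [stepsSum]
  have hsmeq : stepsSum k (p.take m) = t := by
    rw [htake1, ss_append, hsum_take1] at hsum1
    omega
  have hdsum : stepsSum k (p.drop (m+1)) = 0 := by
    have h2 : stepsSum k p = stepsSum k (p.take (m+1)) + stepsSum k (p.drop (m+1)) := by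
      conv_lhs => rw [← List.take_append_drop (m+1) p]
      rw [ss_append]
    rw [hp.1, htake1, ss_append, hsum_take1, hsmeq] at h2
    omega
  refine ⟨(p.take m, p.drop (m+1)), ⟨hsmeq, ?_⟩, ⟨hdsum, ?_⟩, ?_⟩
  · intro r hr; exact hp.2 r (hr.trans (List.take_prefix _ _))
  · intro r hr
    obtain ⟨j, hj, rfl⟩ : ∃ j, j ≤ (p.drop (m+1)).length ∧ r = (p.drop (m+1)).take j :=
      ⟨r.length, hr.length_le, List.prefix_iff_eq_take.mp hr⟩
    have hj2 : m + 1 + j ≤ p.length := by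
      rw [List.length_drop] at hj; omega
    have := hgt (m+1+j) (by omega) hj2
    rw [ss_take_add, htake1, ss_append, hsum_take1, hsmeq] at this
    omega
  · conv_lhs => rw [← List.take_append_drop (m+1) p]
    rw [htake1, hdropcons, hup]
    simp

lemma split_unique {w w' : List Bool × List Bool}
    (h : Ok k t w.1 ∧ Ok k 0 w.2) (h' : Ok k t w'.1 ∧ Ok k 0 w'.2)
    (heq : w.1 ++ true :: w.2 = w'.1 ++ true :: w'.2) : w = w' := by
  obtain ⟨q, d⟩ := w
  obtain ⟨q', d'⟩ := w'
  simp only at h h' heq ⊢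
  have hlen : q.length = q'.length := by
    by_contra hne
    rcases Nat.lt_or_ge q.length q'.length with hlt | hge
    · have h1 := sum_take_gt h.1 h.2 hlt
      rw [heq, List.take_left] at h1
      rw [h'.1.1] at h1
      omega
    · have hlt : q'.length < q.length := by omega
      have h1 := sum_take_gt h'.1 h'.2 hlt
      rw [← heq, List.take_left] at h1
      rw [h.1.1] at h1
      omega
  have hq : q = q' := by
    have := congrArg (List.take q.length) heq
    rwa [List.take_left, hlen, List.take_left] at this
  subst hq
  simp only [List.append_cancel_left_eq, List.cons.injEq, true_and] at heq
  simp [heq]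

/-- The path type. -/
def Pt (k : ℕ) (t : ℤ) := {p : List Bool // stepsSum k p = t ∧ ∀ q, q <+: p → 0 ≤ stepsSum k q}

lemma Pt.ok (p : Pt k t) : Ok k t p.val := p.prop

def castE {a b : ℤ} (h : a = b) : Pt k a ≃ Pt k b :=
  Equiv.subtypeEquivRight (by intro x; rw [h])

@[simp] lemma castE_val {a b : ℤ} (h : a = b) (p : Pt k a) : (castE h p).val = p.val := rfl

def joinF (k : ℕ) (t : ℤ) (h0 : 0 ≤ t) : Pt k t × Pt k 0 → Pt k (t+1) := fun w =>
  ⟨w.1.val ++ true :: w.2.val, by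
    constructor
    · rw [ss_append, w.1.prop.1, ss_cons, w.2.prop.1]; simp
    · intro r hr
      rcases le_or_gt r.length w.1.val.length with hle | hlt
      · exact w.1.prop.2 r (List.prefix_of_prefix_length_le hr (List.prefix_append _ _) hle)
      · have h1 := sum_take_gt w.1.ok w.2.ok hlt
        rw [← List.prefix_iff_eq_take.mp hr] at h1
        omega⟩

lemma joinF_bij (k : ℕ) (t : ℤ) (h0 : 0 ≤ t) (h1 : t + 1 ≤ (k:ℤ)) :
    Function.Bijective (joinF k t h0) := by
  constructor
  · intro w w' h
    have hval : w.1.val ++ true :: w.2.val = w'.1.val ++ true :: w'.2.val :=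
      congrArg Subtype.val h
    have := split_unique (w := (w.1.val, w.2.val)) (w' := (w'.1.val, w'.2.val))
      ⟨w.1.ok, w.2.ok⟩ ⟨w'.1.ok, w'.2.ok⟩ hval
    obtain ⟨h2, h3⟩ := Prod.mk.injEq _ _ _ _ ▸ this
    exact Prod.ext (Subtype.ext h2) (Subtype.ext h3)
  · intro p
    obtain ⟨w, hw1, hw2, hw3⟩ := split_exists ⟨h0, h1⟩ p.ok
    exact ⟨(⟨w.1, hw1⟩, ⟨w.2, hw2⟩), Subtype.ext hw3.symm⟩

noncomputable def splitE (k : ℕ) (t : ℤ) (h0 : 0 ≤ t) (h1 : t + 1 ≤ (k:ℤ)) :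
    Pt k (t+1) ≃ Pt k t × Pt k 0 := (Equiv.ofBijective _ (joinF_bij k t h0 h1)).symm

lemma splitE_len (k : ℕ) (t : ℤ) (h0 : 0 ≤ t) (h1 : t + 1 ≤ (k:ℤ)) (p : Pt k (t+1)) :
    ((splitE k t h0 h1 p).1).val.length + 1 + ((splitE k t h0 h1 p).2).val.length
      = p.val.length := by
  have := (Equiv.ofBijective _ (joinF_bij k t h0 h1)).apply_symm_apply p
  have hval := congrArg (fun x => x.val.length) this
  simp only [Equiv.ofBijective_apply, joinF, List.length_append, List.length_cons] at hval
  rw [← hval]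
  unfold splitE
  omega

lemma tupleE (k : ℕ) (t : ℕ) (ht : t ≤ k) :
    ∃ e : Pt k (t:ℤ) ≃ (Fin (t+1) → Pt k 0),
      ∀ p, (∑ i, ((e p) i).val.length) + t = p.val.length := by
  induction t with
  | zero =>
    refine ⟨(castE (by norm_num)).trans (Equiv.funUnique (Fin 1) (Pt k 0)).symm, ?_⟩
    intro p
    simp [Equiv.funUnique, castE_val]
  | succ t ih =>
    obtain ⟨e0, he0⟩ := ih (Nat.le_of_succ_le ht)
    have h0 : (0:ℤ) ≤ (t:ℤ) := by positivity
    have h1 : (t:ℤ) + 1 ≤ (k:ℤ) := by exact_mod_cast ht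
    have hc : ((t+1:ℕ):ℤ) = (t:ℤ)+1 := by push_cast; ring
    refine ⟨((castE hc).trans (splitE k t h0 h1)).trans
      (((e0.prodCongr (Equiv.refl (Pt k 0))).trans (Equiv.prodComm _ _)).trans
        (Fin.consEquiv (fun _ => Pt k 0))), ?_⟩
    intro p
    have hlen := splitE_len k t h0 h1 (castE hc p)
    have hsum := he0 (splitE k t h0 h1 (castE hc p)).1
    have hval : (castE hc p).val = p.val := rfl
    rw [hval] at hlen
    simp only [Equiv.trans_apply, Equiv.prodCongr_apply, Prod.map_apply, Equiv.coe_refl,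
      id_eq, Equiv.prodComm_apply, Prod.swap_prod_mk, Fin.consEquiv_apply,
      Prod.fst_swap, Prod.snd_swap, Prod.map_fst, Prod.map_snd]
    rw [Fin.sum_univ_succ]
    simp only [Fin.cons_zero, Fin.cons_succ]
    omega

/-! ### Counting -/

instance slice_finite (k : ℕ) (t : ℤ) (N : ℕ) : Finite {p : Pt k t // p.val.length = N} := by
  have h : Set.Finite {l : List Bool | l.length = N} := List.finite_length_eq Bool N
  haveI := h.to_subtype
  exact Finite.of_injective
    (fun p => (⟨p.val.val, p.prop⟩ : {l : List Bool // l ∈ {l : List Bool | l.length = N}}))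
    (by
      intro p q h
      have h' : p.val.val = q.val.val := by simpa using congrArg Subtype.val h
      exact Subtype.ext (Subtype.ext h'))

lemma card_prod_slice {A B : Type} (wa : A → ℕ) (wb : B → ℕ)
    [ha : ∀ n, Finite {a : A // wa a = n}] [hb : ∀ n, Finite {b : B // wb b = n}] (N : ℕ) :
    Nat.card {x : A × B // wa x.1 + wb x.2 = N}
      = ∑ ij ∈ Finset.HasAntidiagonal.antidiagonal N,
          Nat.card {a : A // wa a = ij.1} * Nat.card {b : B // wb b = ij.2} := by
  classical
  haveI : ∀ n, Fintype {a : A // wa a = n} := fun n => Fintype.ofFinite _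
  haveI : ∀ n, Fintype {b : B // wb b = n} := fun n => Fintype.ofFinite _
  let E : {x : A × B // wa x.1 + wb x.2 = N} ≃
      Σ ij : Finset.HasAntidiagonal.antidiagonal N, {a : A // wa a = ij.val.1} × {b : B // wb b = ij.val.2} :=
    { toFun := fun x => ⟨⟨(wa x.val.1, wb x.val.2), by
        simp only [Finset.HasAntidiagonal.mem_antidiagonal]; exact x.prop⟩,
        ⟨x.val.1, rfl⟩, ⟨x.val.2, rfl⟩⟩
      invFun := fun s => ⟨(s.2.1.val, s.2.2.val), by
        have h := Finset.HasAntidiagonal.mem_antidiagonal.mp s.1.prop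
        simp only [s.2.1.prop, s.2.2.prop]
        exact h⟩
      left_inv := fun x => rfl
      right_inv := by
        rintro ⟨⟨⟨i, j⟩, h⟩, ⟨a, ha⟩, ⟨b, hb⟩⟩
        dsimp only at ha hb ⊢
        subst ha
        subst hb
        rfl }
  rw [Nat.card_congr E, Nat.card_eq_fintype_card, Fintype.card_sigma,
    ← Finset.sum_coe_sort (Finset.HasAntidiagonal.antidiagonal N)
      (fun ij => Nat.card {a : A // wa a = ij.1} * Nat.card {b : B // wb b = ij.2})]
  apply Finset.sum_congr rfl
  intro ij _
  rw [Fintype.card_prod, Nat.card_eq_fintype_card, Nat.card_eq_fintype_card]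

lemma card_slice_succ (k : ℕ) (t : ℕ) (h0 : (0:ℤ) ≤ (t:ℤ)) (h1 : (t:ℤ)+1 ≤ (k:ℤ)) (N : ℕ) :
    Nat.card {p : Pt k ((t:ℤ)+1) // p.val.length = N+1}
      = ∑ ij ∈ Finset.HasAntidiagonal.antidiagonal N,
          Nat.card {p : Pt k (t:ℤ) // p.val.length = ij.1} *
          Nat.card {p : Pt k 0 // p.val.length = ij.2} := by
  rw [← card_prod_slice (fun a : Pt k (t:ℤ) => a.val.length) (fun b : Pt k 0 => b.val.length) N]
  apply Nat.card_congr
  refine Equiv.subtypeEquiv (splitE k t h0 h1) ?_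
  intro p
  have := splitE_len k t h0 h1 p
  constructor <;> intro h <;> omega

lemma card_slice_zero_of_pos (k : ℕ) (t : ℤ) (htpos : 0 < t) :
    Nat.card {p : Pt k t // p.val.length = 0} = 0 := by
  have : IsEmpty {p : Pt k t // p.val.length = 0} := by
    refine ⟨fun p => ?_⟩
    have h1 : p.val.val = [] := List.length_eq_zero_iff.mp p.prop
    have h2 := p.val.prop.1
    rw [h1, ss_nil] at h2
    omega
  exact Nat.card_of_isEmpty

lemma card_slice_nil (k : ℕ) : Nat.card {p : Pt k 0 // p.val.length = 0} = 1 := by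
  haveI : Unique {p : Pt k 0 // p.val.length = 0} :=
    { default := ⟨⟨[], by simp, fun q hq => by rw [List.prefix_nil.mp hq, ss_nil]⟩, rfl⟩
      uniq := by
        rintro ⟨⟨l, hl⟩, h0⟩
        have : l = [] := List.length_eq_zero_iff.mp h0
        subst this
        rfl }
  exact Nat.card_unique

lemma last_false (hk : 0 < k) (p : List Bool) (hp : Ok k 0 p) (hne : p ≠ []) :
    p.dropLast ++ [false] = p ∧ Ok k (k:ℤ) p.dropLast := by
  have hd := List.dropLast_append_getLast hne
  have hpre := hp.2 p.dropLast (List.dropLast_prefix p)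
  have hl : p.getLast hne = false := by
    by_contra hT
    have hT' : p.getLast hne = true := by simpa using hT
    have := hp.1
    rw [← hd, ss_append, hT'] at this
    simp at this
    omega
  rw [hl] at hd
  have hsum : stepsSum k p.dropLast = (k:ℤ) := by
    have := hp.1
    rw [← hd, ss_append] at this
    simp at this
    omega
  exact ⟨hd, hsum, fun q hq => hp.2 q (hq.trans (List.dropLast_prefix p))⟩

def lastE (k : ℕ) (hk : 0 < k) (N : ℕ) :
    {p : Pt k 0 // p.val.length = N+1} ≃ {p : Pt k (k:ℤ) // p.val.length = N} where
  toFun p :=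
    ⟨⟨p.val.val.dropLast,
      (last_false hk p.val.val p.val.prop
        (List.ne_nil_of_length_pos (by rw [p.prop]; omega))).2⟩,
      by simp [List.length_dropLast, p.prop]⟩
  invFun w :=
    ⟨⟨w.val.val ++ [false], by
      constructor
      · rw [ss_append, w.val.prop.1]; simp
      · intro r hr
        rcases List.prefix_concat_iff.mp hr with h | h
        · subst h
          rw [ss_append, w.val.prop.1]
          simp
        · exact w.val.prop.2 r h⟩,
      by simp [w.prop]⟩
  left_inv p := by
    apply Subtype.ext
    apply Subtype.ext
    exact (last_false hk p.val.val p.val.prop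
      (List.ne_nil_of_length_pos (by rw [p.prop]; omega))).1
  right_inv w := by
    apply Subtype.ext
    apply Subtype.ext
    exact List.dropLast_concat

noncomputable def F (k : ℕ) (t : ℤ) : PowerSeries ℚ :=
  PowerSeries.mk fun N => (Nat.card {p : Pt k t // p.val.length = N} : ℚ)

lemma F_succ (k : ℕ) (t : ℕ) (h1 : (t:ℤ)+1 ≤ (k:ℤ)) :
    F k ((t:ℤ)+1) = X * F k (t:ℤ) * F k 0 := by
  rw [mul_assoc]
  ext N
  cases N with
  | zero =>
    rw [coeff_zero_X_mul]
    simp only [F, coeff_mk]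
    rw [card_slice_zero_of_pos k _ (by positivity)]
    norm_num
  | succ n =>
    rw [coeff_succ_X_mul, coeff_mul]
    simp only [F, coeff_mk]
    rw [card_slice_succ k t (by positivity) h1 n]
    push_cast
    rfl

lemma F_zero_eq (hk : 0 < k) : F k 0 = 1 + X * F k (k:ℤ) := by
  ext N
  cases N with
  | zero =>
    rw [map_add, coeff_zero_X_mul]
    simp only [F, coeff_mk]
    rw [card_slice_nil k]
    simp
  | succ n =>
    rw [map_add, coeff_succ_X_mul]
    simp only [F, coeff_mk]
    rw [Nat.card_congr (lastE k hk n)]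
    have h1 : (coeff (n+1)) (1 : PowerSeries ℚ) = 0 := by
      rw [coeff_one]
      simp
    rw [h1, zero_add]

lemma F_pow (k : ℕ) : ∀ t : ℕ, t ≤ k → F k (t:ℤ) = X^t * (F k 0)^(t+1)
  | 0, _ => by simp
  | (t+1), ht => by
    have h1 : (t:ℤ)+1 ≤ (k:ℤ) := by exact_mod_cast ht
    have hc : ((t+1:ℕ):ℤ) = (t:ℤ)+1 := by push_cast; ring
    rw [hc, F_succ k t h1, F_pow k t (Nat.le_of_succ_le ht)]
    ring

lemma F0_eq (hk : 0 < k) : F k 0 = 1 + X^(k+1) * (F k 0)^(k+1) := by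
  conv_lhs => rw [F_zero_eq hk]
  rw [F_pow k k le_rfl]
  ring

lemma uniq (m : ℕ) (hm : 0 < m) (f g : PowerSeries ℚ)
    (hf : f = 1 + X^m * f^m) (hg : g = 1 + X^m * g^m) : f = g := by
  have key : f - g = X^m * ((∑ i ∈ Finset.range m, f^i * g^(m-1-i)) * (f - g)) := by
    conv_lhs => rw [hf, hg]
    rw [geom_sum₂_mul]
    ring
  ext N
  induction N using Nat.strong_induction_on with
  | _ N ih =>
    have h0 : (coeff N) (f - g) = 0 := by
      rw [key, coeff_X_pow_mul']
      split
      · next hmN =>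
        rw [coeff_mul]
        apply Finset.sum_eq_zero
        intro ij hij
        have hij2 : ij.2 < N := by
          have := Finset.HasAntidiagonal.mem_antidiagonal.mp hij
          omega
        have := ih ij.2 hij2
        rw [map_sub, this, sub_self, mul_zero]
      · rfl
    rw [map_sub] at h0
    linarith

end Aux

open Aux in
theorem stmt_12 (k t : ℕ) (hk : 0 < k) (ht : t ≤ k)
    (y : PowerSeries ℚ) (hy : y = 1 + X ^ (k + 1) * y ^ (k + 1)) :
    (∃ e : {p : List Bool // stepsSum k p = t ∧ ∀ q, q <+: p → 0 ≤ stepsSum k q} ≃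
          (Fin (t + 1) → {p : List Bool // stepsSum k p = 0 ∧
            ∀ q, q <+: p → 0 ≤ stepsSum k q}),
        ∀ p, (∑ i, ((e p) i).val.length) + t = p.val.length) ∧
    ∀ N : ℕ,
      (Nat.card {p : {p : List Bool // stepsSum k p = t ∧
          ∀ q, q <+: p → 0 ≤ stepsSum k q} // p.val.length = N} : ℚ) =
        coeff N (X ^ t * y ^ (t + 1)) := by
  constructor
  · exact tupleE k t ht
  · intro N
    have hyF : y = F k 0 := uniq (k+1) (by omega) y (F k 0) hy (F0_eq hk)
    rw [hyF, ← F_pow k t ht]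
    simp only [F, coeff_mk]
    rfl
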